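/- Let (T_n(t))_{t>0}, n ∈ ℕ, be a sequence of sub-Markovian semigroups of kernel operators on a Polish space E which is monotone in n, i.e. either T_n(t) ≤ T_{n+1}(t) for all n and t > 0, or T_n(t) ≥ T_{n+1}(t) for all n and t > 0. Assume that (A) every semigroup T_n enjoys the strong Feller property, and (B) for some λ > 0 the function R(λ)𝟙 is continuous on E, where (T(t))_{t>0} is the limit semigroup given by (T(t)f)(x) = lim_{n→∞}(T_n(t)f)(x) and (R(λ))_{λ>0} is its Laplace transform, (R(λ)f)(x) = ∫_0^∞ e^{−λt}(T(t)f)(x) dt. Then the limit semigroup (T(t))_{t>0} enjoys the strong Feller property, i.e. T(t)f ∈ C_b(E) for every t > 0 and every f ∈ B_b(E). -/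

import Mathlib

open MeasureTheory Filter Topology

/-- `f` is a bounded Borel measurable real-valued function. -/
def IsBb {E : Type*} [MeasurableSpace E] (f : E → ℝ) : Prop :=
  Measurable f ∧ ∃ C : ℝ, ∀ x, |f x| ≤ C

/-- `f` is a bounded continuous real-valued function. -/
def IsCb {E : Type*} [TopologicalSpace E] (f : E → ℝ) : Prop :=
  Continuous f ∧ ∃ C : ℝ, ∀ x, |f x| ≤ C

/-- The kernel operator associated with a kernel `k : E → Measure E`. -/
noncomputable def kOp {E : Type*} [MeasurableSpace E] (k : E → Measure E) (f : E → ℝ) (x : E) : ℝ :=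
  ∫ y, f y ∂(k x)

/-- `(k t)_{t>0}` is a positive semigroup of kernels on `E`, bounded by `M`:
measurability in `x`, total mass bounded by `M`, Chapman–Kolmogorov, and joint
measurability of `(t,x) ↦ (T(t)f)(x)` on `(0,∞) × E` for bounded measurable `f`. -/
def IsKernelSemigroup {E : Type*} [MeasurableSpace E] (k : ℝ → E → Measure E) (M : NNReal) : Prop :=
  (∀ t, 0 < t → ∀ A : Set E, MeasurableSet A → Measurable fun x => k t x A) ∧
  (∀ t, 0 < t → ∀ x, k t x Set.univ ≤ (M : ENNReal)) ∧
  (∀ t, 0 < t → ∀ s, 0 < s → ∀ x, ∀ A : Set E, MeasurableSet A →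
    k (t + s) x A = ∫⁻ y, k s y A ∂(k t x)) ∧
  (∀ f : E → ℝ, IsBb f → Measurable fun p : Set.Ioi (0:ℝ) × E => kOp (k p.1.1) f p.2)

/-- The Laplace transform (pseudo-resolvent) of the semigroup of kernel operators. -/
noncomputable def laplaceOp {E : Type*} [MeasurableSpace E]
    (k : ℝ → E → Measure E) (l : ℝ) (f : E → ℝ) (x : E) : ℝ :=
  ∫ t in Set.Ioi (0:ℝ), Real.exp (-l * t) * kOp (k t) f x

namespace SF

variable {E : Type*} [MeasurableSpace E]

lemma isBb_one : IsBb (fun _ : E => (1:ℝ)) := ⟨measurable_const, 1, fun _ => by norm_num⟩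

lemma kOp_one (k : E → Measure E) (x : E) : kOp k (fun _ => (1:ℝ)) x = (k x Set.univ).toReal := by
  simp [kOp, Measure.real]

lemma kOp_indicator (k : E → Measure E) {A : Set E} (hA : MeasurableSet A) (x : E) :
    kOp k (A.indicator fun _ => (1:ℝ)) x = (k x A).toReal := by
  simp [kOp, integral_indicator_const _ hA, Measure.real]

lemma isBb_indicator {A : Set E} (hA : MeasurableSet A) : IsBb (A.indicator fun _ => (1:ℝ)) :=
  ⟨measurable_const.indicator hA, 1, fun x => by
    by_cases h : x ∈ A <;> simp [h]⟩

lemma integrable_of_bdd {μ : Measure E} [IsFiniteMeasure μ] {f : E → ℝ} {C : ℝ}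
    (hfm : Measurable f) (hf : ∀ y, |f y| ≤ C) : Integrable f μ :=
  (integrable_const C).mono' hfm.aestronglyMeasurable (ae_of_all _ fun y => by
    simpa [Real.norm_eq_abs] using hf y)

lemma kOp_abs_le {k : E → Measure E} {f : E → ℝ} {C : ℝ} {x : E}
    (hm : k x Set.univ ≤ 1) (hf : ∀ y, |f y| ≤ C) : |kOp k f x| ≤ C := by
  haveI : IsFiniteMeasure (k x) := ⟨lt_of_le_of_lt hm (by norm_num)⟩
  have hC : 0 ≤ C := le_trans (abs_nonneg _) (hf x)
  have h1 : ((k x) Set.univ).toReal ≤ 1 := by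
    simpa using ENNReal.toReal_mono ENNReal.one_ne_top hm
  have h2 : ‖∫ y, f y ∂(k x)‖ ≤ C * ((k x) Set.univ).toReal :=
    norm_integral_le_of_norm_le_const (ae_of_all _ fun y => by
      simpa [Real.norm_eq_abs] using hf y)
  rw [Real.norm_eq_abs] at h2
  calc |kOp k f x| ≤ C * ((k x) Set.univ).toReal := h2
    _ ≤ C := by nlinarith

lemma kOp_nonneg_one (k : E → Measure E) (x : E) : 0 ≤ kOp k (fun _ => (1:ℝ)) x := by
  rw [kOp_one]; exact ENNReal.toReal_nonneg

lemma integral_diff_mass_le {μ ν : Measure E} (hν : ν Set.univ ≤ 1) (hle : μ ≤ ν)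
    {f : E → ℝ} {C : ℝ} (hfm : Measurable f) (hf : ∀ y, |f y| ≤ C) :
    |∫ y, f y ∂ν - ∫ y, f y ∂μ| ≤ C * ((ν Set.univ).toReal - (μ Set.univ).toReal) := by
  haveI : IsFiniteMeasure ν := ⟨lt_of_le_of_lt hν (by norm_num)⟩
  haveI : IsFiniteMeasure μ := isFiniteMeasure_of_le ν hle
  haveI : IsFiniteMeasure (ν - μ) := isFiniteMeasure_of_le ν Measure.sub_le
  have hcan : ν - μ + μ = ν := Measure.sub_add_cancel_of_le hle
  have h1 : ∫ y, f y ∂ν = ∫ y, f y ∂(ν - μ) + ∫ y, f y ∂μ := by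
    conv_lhs => rw [← hcan]
    exact integral_add_measure (integrable_of_bdd hfm hf) (integrable_of_bdd hfm hf)
  have h2 : ‖∫ y, f y ∂(ν - μ)‖ ≤ C * ((ν - μ) Set.univ).toReal :=
    norm_integral_le_of_norm_le_const (ae_of_all _ fun y => by
      simpa [Real.norm_eq_abs] using hf y)
  have h3 : ((ν - μ) Set.univ).toReal = (ν Set.univ).toReal - (μ Set.univ).toReal := by
    have := congrArg (fun m : Measure E => (m Set.univ).toReal) hcan
    simp only [Measure.coe_add, Pi.add_apply] at this
    rw [ENNReal.toReal_add (measure_ne_top _ _) (measure_ne_top _ _)] at this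
    linarith
  rw [Real.norm_eq_abs] at h2
  rw [h1]
  simpa [h3] using h2

lemma mass_antitone {k : ℝ → E → Measure E} (hsg : IsKernelSemigroup k 1) {σ τ : ℝ}
    (h0 : 0 < σ) (hστ : σ ≤ τ) (x : E) : k τ x Set.univ ≤ k σ x Set.univ := by
  rcases eq_or_lt_of_le hστ with h | h
  · rw [h]
  · have hck := hsg.2.2.1 σ h0 (τ - σ) (by linarith) x Set.univ MeasurableSet.univ
    rw [show σ + (τ - σ) = τ by ring] at hck
    rw [hck]
    calc ∫⁻ y, k (τ - σ) y Set.univ ∂(k σ x) ≤ ∫⁻ _, 1 ∂(k σ x) := by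
          apply lintegral_mono
          intro y
          simpa using hsg.2.1 (τ - σ) (by linarith) y
      _ = k σ x Set.univ := lintegral_one

lemma kOp_comp {k : ℝ → E → Measure E} (hsg : IsKernelSemigroup k 1) {t s : ℝ}
    (ht : 0 < t) (hs : 0 < s) {f : E → ℝ} (hf : IsBb f) (x : E) :
    kOp (k (t + s)) f x = kOp (k t) (fun y => kOp (k s) f y) x := by
  obtain ⟨hfm, C, hfC⟩ := hf
  have hC : 0 ≤ C := le_trans (abs_nonneg _) (hfC x)
  haveI h1 : IsFiniteMeasure (k (t + s) x) :=
    ⟨lt_of_le_of_lt (by simpa using hsg.2.1 (t + s) (by linarith) x) (by norm_num)⟩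
  haveI h2 : IsFiniteMeasure (k t x) :=
    ⟨lt_of_le_of_lt (by simpa using hsg.2.1 t ht x) (by norm_num)⟩
  have hks : Measurable (k s) :=
    Measure.measurable_of_measurable_coe _ (fun A hA => hsg.1 s hs A hA)
  have hbind : k (t + s) x = (k t x).bind (k s) := by
    ext A hA
    rw [Measure.bind_apply hA hks.aemeasurable]
    exact hsg.2.2.1 t ht s hs x A hA
  have key : ∀ g : E → ℝ, Measurable g → (∀ y, 0 ≤ g y) → (∀ y, g y ≤ C) →
      Measurable (fun y => ∫ z, g z ∂(k s y)) ∧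
      ∫ y, g y ∂(k (t + s) x) = ∫ y, (∫ z, g z ∂(k s y)) ∂(k t x) := by
    intro g hgm hg0 hgC
    have hgl : Measurable (fun z => ENNReal.ofReal (g z)) := ENNReal.measurable_ofReal.comp hgm
    have hGne : ∀ y, (∫⁻ z, ENNReal.ofReal (g z) ∂(k s y)) ≠ ⊤ := by
      intro y
      refine ne_top_of_le_ne_top (b := ENNReal.ofReal C) ENNReal.ofReal_ne_top ?_
      calc ∫⁻ z, ENNReal.ofReal (g z) ∂(k s y) ≤ ∫⁻ _, ENNReal.ofReal C ∂(k s y) :=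
            lintegral_mono fun z => ENNReal.ofReal_le_ofReal (hgC z)
        _ = ENNReal.ofReal C * (k s y Set.univ) := by rw [lintegral_const]
        _ ≤ ENNReal.ofReal C * 1 := by
            gcongr
            simpa using hsg.2.1 s hs y
        _ = _ := mul_one _
    have hGrepr : ∀ y, ∫ z, g z ∂(k s y) = (∫⁻ z, ENNReal.ofReal (g z) ∂(k s y)).toReal := by
      intro y
      rw [integral_eq_lintegral_of_nonneg_ae (ae_of_all _ hg0) hgm.aestronglyMeasurable]
    have hGm : Measurable fun y => (∫⁻ z, ENNReal.ofReal (g z) ∂(k s y)) :=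
      (Measure.measurable_lintegral hgl).comp hks
    have hGm' : Measurable fun y => ∫ z, g z ∂(k s y) := by
      simp only [hGrepr]
      exact hGm.ennreal_toReal
    refine ⟨hGm', ?_⟩
    have hlin : ∫⁻ z, ENNReal.ofReal (g z) ∂(k (t + s) x)
        = ∫⁻ y, (∫⁻ z, ENNReal.ofReal (g z) ∂(k s y)) ∂(k t x) := by
      rw [hbind]; exact Measure.lintegral_bind hks.aemeasurable hgl.aemeasurable
    rw [integral_eq_lintegral_of_nonneg_ae (ae_of_all _ hg0) hgm.aestronglyMeasurable, hlin]
    rw [show (fun y => ∫ z, g z ∂(k s y)) = fun y => (∫⁻ z, ENNReal.ofReal (g z) ∂(k s y)).toReal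
      from funext hGrepr]
    rw [integral_eq_lintegral_of_nonneg_ae (ae_of_all _ fun y => ENNReal.toReal_nonneg)
      hGm.ennreal_toReal.aestronglyMeasurable]
    congr 1
    refine lintegral_congr fun y => ?_
    rw [ENNReal.ofReal_toReal (hGne y)]
  set p := fun y => max (f y) 0 with hp
  set q := fun y => max (-f y) 0 with hq
  have hpm : Measurable p := hfm.max measurable_const
  have hqm : Measurable q := hfm.neg.max measurable_const
  have hp0 : ∀ y, 0 ≤ p y := fun y => le_max_right _ _
  have hq0 : ∀ y, 0 ≤ q y := fun y => le_max_right _ _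
  have hpC : ∀ y, p y ≤ C := fun y => max_le (le_trans (le_abs_self _) (hfC y)) hC
  have hqC : ∀ y, q y ≤ C := fun y => max_le (le_trans (neg_le_abs _) (hfC y)) hC
  have hpqabs : ∀ y, |p y| ≤ C := fun y => by rw [abs_of_nonneg (hp0 y)]; exact hpC y
  have hqabs : ∀ y, |q y| ≤ C := fun y => by rw [abs_of_nonneg (hq0 y)]; exact hqC y
  have hfpq : ∀ y, f y = p y - q y := by
    intro y
    rcases le_total 0 (f y) with h | h
    · rw [hp, hq]; simp only []
      rw [max_eq_left h, max_eq_right (by linarith)]; ring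
    · rw [hp, hq]; simp only []
      rw [max_eq_right h, max_eq_left (by linarith)]; ring
  obtain ⟨hpmeas, hpkey⟩ := key p hpm hp0 hpC
  obtain ⟨hqmeas, hqkey⟩ := key q hqm hq0 hqC
  have hsplit : ∀ (μ : Measure E), IsFiniteMeasure μ →
      ∫ y, f y ∂μ = ∫ y, p y ∂μ - ∫ y, q y ∂μ := by
    intro μ hμ
    haveI := hμ
    rw [← integral_sub (integrable_of_bdd hpm hpqabs) (integrable_of_bdd hqm hqabs)]
    exact integral_congr_ae (ae_of_all _ hfpq)
  have hinner : ∀ y, kOp (k s) f y = (∫ z, p z ∂(k s y)) - ∫ z, q z ∂(k s y) := by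
    intro y
    haveI : IsFiniteMeasure (k s y) :=
      ⟨lt_of_le_of_lt (by simpa using hsg.2.1 s hs y) (by norm_num)⟩
    exact hsplit (k s y) inferInstance
  have habsP : ∀ y, |∫ z, p z ∂(k s y)| ≤ C := fun y =>
    kOp_abs_le (by simpa using hsg.2.1 s hs y) hpqabs
  have habsQ : ∀ y, |∫ z, q z ∂(k s y)| ≤ C := fun y =>
    kOp_abs_le (by simpa using hsg.2.1 s hs y) hqabs
  calc kOp (k (t + s)) f x = ∫ y, p y ∂(k (t + s) x) - ∫ y, q y ∂(k (t + s) x) :=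
        hsplit _ inferInstance
    _ = ∫ y, (∫ z, p z ∂(k s y)) ∂(k t x) - ∫ y, (∫ z, q z ∂(k s y)) ∂(k t x) := by
        rw [hpkey, hqkey]
    _ = ∫ y, ((∫ z, p z ∂(k s y)) - ∫ z, q z ∂(k s y)) ∂(k t x) :=
        (integral_sub (integrable_of_bdd hpmeas habsP) (integrable_of_bdd hqmeas habsQ)).symm
    _ = kOp (k t) (fun y => kOp (k s) f y) x :=
        integral_congr_ae (ae_of_all _ fun y => (hinner y).symm)

/-- restricted Laplace transform over a set of times -/
noncomputable def lap (k : ℝ → E → Measure E) (l : ℝ) (S : Set ℝ) (y : E) : ℝ :=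
  ∫ τ in S, Real.exp (-l * τ) * kOp (k τ) (fun _ => (1:ℝ)) y

lemma lap_Ioi (k : ℝ → E → Measure E) (l : ℝ) :
    laplaceOp k l (fun _ => (1:ℝ)) = fun y => lap k l (Set.Ioi 0) y := rfl

lemma sec_meas {k : ℝ → E → Measure E} {f : E → ℝ}
    (hj : Measurable fun p : Set.Ioi (0:ℝ) × E => kOp (k p.1.1) f p.2) (y : E) :
    AEMeasurable (fun τ : ℝ => kOp (k τ) f y) (volume.restrict (Set.Ioi (0:ℝ))) := by
  have hsub : Measurable fun τ : Set.Ioi (0:ℝ) => kOp (k τ.1) f y :=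
    hj.comp (measurable_id.prodMk measurable_const)
  rw [← map_comap_subtype_coe measurableSet_Ioi]
  exact ((MeasurableEmbedding.subtype_coe measurableSet_Ioi).aemeasurable_map_iff).2
    hsub.aemeasurable

lemma sec_aesm {k : ℝ → E → Measure E} {f : E → ℝ} {l : ℝ}
    (hj : Measurable fun p : Set.Ioi (0:ℝ) × E => kOp (k p.1.1) f p.2) (y : E) :
    AEStronglyMeasurable (fun τ : ℝ => Real.exp (-l * τ) * kOp (k τ) f y)
      (volume.restrict (Set.Ioi (0:ℝ))) :=
  ((Real.measurable_exp.comp (measurable_const.mul measurable_id)).aemeasurable.mul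
    (sec_meas hj y)).aestronglyMeasurable

lemma normb {v C l τ : ℝ} (h : |v| ≤ C) : ‖Real.exp (-l * τ) * v‖ ≤ C * Real.exp (-l * τ) := by
  rw [Real.norm_eq_abs, abs_mul, abs_of_nonneg (Real.exp_pos _).le]
  nlinarith [(Real.exp_pos (-l * τ)).le]

lemma sec_integrableOn {k : ℝ → E → Measure E} {f : E → ℝ} {l C : ℝ} (hl : 0 < l)
    (hj : Measurable fun p : Set.Ioi (0:ℝ) × E => kOp (k p.1.1) f p.2)
    (hbd : ∀ τ, 0 < τ → ∀ y, |kOp (k τ) f y| ≤ C) {S : Set ℝ} (hS : S ⊆ Set.Ioi (0:ℝ)) (y : E) :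
    IntegrableOn (fun τ : ℝ => Real.exp (-l * τ) * kOp (k τ) f y) S := by
  have hIoi : IntegrableOn (fun τ : ℝ => Real.exp (-l * τ) * kOp (k τ) f y) (Set.Ioi 0) := by
    refine Integrable.mono' ((exp_neg_integrableOn_Ioi 0 hl).const_mul C) (sec_aesm hj y) ?_
    refine (ae_restrict_iff' measurableSet_Ioi).2 (ae_of_all _ fun τ hτ => ?_)
    calc ‖Real.exp (-l * τ) * kOp (k τ) f y‖ ≤ C * Real.exp (-l * τ) := normb (hbd τ hτ y)
      _ = C * Real.exp (-l * τ) := rfl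
  exact hIoi.mono_set hS

lemma lap_integrableOn {k : ℝ → E → Measure E} {l : ℝ} (hl : 0 < l)
    (hj : Measurable fun p : Set.Ioi (0:ℝ) × E => kOp (k p.1.1) (fun _ => (1:ℝ)) p.2)
    (hm : ∀ τ, 0 < τ → ∀ y, k τ y Set.univ ≤ 1) {S : Set ℝ} (hS : S ⊆ Set.Ioi (0:ℝ)) (y : E) :
    IntegrableOn (fun τ : ℝ => Real.exp (-l * τ) * kOp (k τ) (fun _ => (1:ℝ)) y) S :=
  sec_integrableOn (C := 1) hl hj (fun τ hτ y => kOp_abs_le (hm τ hτ y) (fun _ => by norm_num)) hS y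

lemma lap_continuous [TopologicalSpace E] [FirstCountableTopology E]
    {k : ℝ → E → Measure E} {l : ℝ} (hl : 0 < l)
    (hj : Measurable fun p : Set.Ioi (0:ℝ) × E => kOp (k p.1.1) (fun _ => (1:ℝ)) p.2)
    (hm : ∀ τ, 0 < τ → ∀ y, k τ y Set.univ ≤ 1)
    (hc : ∀ τ, 0 < τ → Continuous fun y => kOp (k τ) (fun _ => (1:ℝ)) y)
    {S : Set ℝ} (hSm : MeasurableSet S) (hS : S ⊆ Set.Ioi (0:ℝ)) :
    Continuous fun y => lap k l S y := by
  unfold lap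
  refine continuous_of_dominated (μ := volume.restrict S)
    (F := fun y (τ : ℝ) => Real.exp (-l * τ) * kOp (k τ) (fun _ => (1:ℝ)) y)
    (bound := fun τ => 1 * Real.exp (-l * τ)) ?_ ?_ ?_ ?_
  · intro y
    exact (sec_aesm hj y).mono_measure (Measure.restrict_mono hS le_rfl)
  · intro y
    refine (ae_restrict_iff' hSm).2 (ae_of_all _ fun τ hτ => ?_)
    show ‖Real.exp (-l * τ) * kOp (k τ) (fun _ => (1:ℝ)) y‖ ≤ 1 * Real.exp (-l * τ)
    exact normb (kOp_abs_le (hm τ (hS hτ) y) (fun _ => by norm_num))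
  · have hbint : IntegrableOn (fun τ : ℝ => 1 * Real.exp (-l * τ)) (Set.Ioi 0) :=
      (exp_neg_integrableOn_Ioi 0 hl).const_mul 1
    exact hbint.mono_set hS
  · refine (ae_restrict_iff' hSm).2 (ae_of_all _ fun τ hτ => ?_)
    exact continuous_const.mul (hc τ (hS hτ))

lemma lap_tendsto {kseq : ℕ → ℝ → E → Measure E} {klim : ℝ → E → Measure E} {l : ℝ} (hl : 0 < l)
    (hjn : ∀ n, Measurable fun p : Set.Ioi (0:ℝ) × E => kOp (kseq n p.1.1) (fun _ => (1:ℝ)) p.2)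
    (hmn : ∀ n τ, 0 < τ → ∀ y, kseq n τ y Set.univ ≤ 1)
    {S : Set ℝ} (hSm : MeasurableSet S) (hS : S ⊆ Set.Ioi (0:ℝ)) (y : E)
    (hptw : ∀ τ, 0 < τ → Tendsto (fun n => kOp (kseq n τ) (fun _ => (1:ℝ)) y) atTop
      (𝓝 (kOp (klim τ) (fun _ => (1:ℝ)) y))) :
    Tendsto (fun n => lap (kseq n) l S y) atTop (𝓝 (lap klim l S y)) := by
  unfold lap
  refine tendsto_integral_of_dominated_convergence (μ := volume.restrict S)
    (F := fun n (τ : ℝ) => Real.exp (-l * τ) * kOp (kseq n τ) (fun _ => (1:ℝ)) y)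
    (f := fun τ : ℝ => Real.exp (-l * τ) * kOp (klim τ) (fun _ => (1:ℝ)) y)
    (fun τ => 1 * Real.exp (-l * τ)) ?_ ?_ ?_ ?_
  · intro n
    exact (sec_aesm (hjn n) y).mono_measure (Measure.restrict_mono hS le_rfl)
  · have hbint : IntegrableOn (fun τ : ℝ => 1 * Real.exp (-l * τ)) (Set.Ioi 0) :=
      (exp_neg_integrableOn_Ioi 0 hl).const_mul 1
    exact hbint.mono_set hS
  · intro n
    refine (ae_restrict_iff' hSm).2 (ae_of_all _ fun τ hτ => ?_)
    show ‖Real.exp (-l * τ) * kOp (kseq n τ) (fun _ => (1:ℝ)) y‖ ≤ 1 * Real.exp (-l * τ)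
    exact normb (kOp_abs_le (hmn n τ (hS hτ) y) (fun _ => by norm_num))
  · refine (ae_restrict_iff' hSm).2 (ae_of_all _ fun τ hτ => ?_)
    exact (hptw τ (hS hτ)).const_mul _

lemma lap_split {k : ℝ → E → Measure E} {l : ℝ} (hl : 0 < l)
    (hj : Measurable fun p : Set.Ioi (0:ℝ) × E => kOp (k p.1.1) (fun _ => (1:ℝ)) p.2)
    (hm : ∀ τ, 0 < τ → ∀ y, k τ y Set.univ ≤ 1) {a b : ℝ} (ha : 0 < a) (hab : a < b) (y : E) :
    lap k l (Set.Ioi 0) y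
      = lap k l (Set.Ioc 0 a) y + lap k l (Set.Ioc a b) y + lap k l (Set.Ioi b) y := by
  have h1 : Set.Ioc (0:ℝ) a ∪ Set.Ioi a = Set.Ioi 0 := Set.Ioc_union_Ioi_eq_Ioi ha.le
  have h2 : Set.Ioc a b ∪ Set.Ioi b = Set.Ioi a := Set.Ioc_union_Ioi_eq_Ioi hab.le
  have hIa : Set.Ioi a ⊆ Set.Ioi (0:ℝ) := fun τ hτ => lt_trans ha hτ
  have e2 : lap k l (Set.Ioi a) y = lap k l (Set.Ioc a b) y + lap k l (Set.Ioi b) y := by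
    rw [lap, ← h2]
    exact setIntegral_union (Set.Ioc_disjoint_Ioi le_rfl) measurableSet_Ioi
      (lap_integrableOn hl hj hm (fun τ hτ => lt_trans ha hτ.1) y)
      (lap_integrableOn hl hj hm (fun τ hτ => lt_trans ha (lt_trans hab hτ)) y)
  have e1 : lap k l (Set.Ioi 0) y = lap k l (Set.Ioc 0 a) y + lap k l (Set.Ioi a) y := by
    rw [lap, ← h1]
    exact setIntegral_union (Set.Ioc_disjoint_Ioi le_rfl) measurableSet_Ioi
      (lap_integrableOn hl hj hm (fun τ hτ => hτ.1) y)
      (lap_integrableOn hl hj hm hIa y)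
  rw [e1, e2, add_assoc]

lemma W_pos {l a b : ℝ} (hl : 0 < l) (hab : a < b) :
    0 < ∫ τ in Set.Ioc a b, Real.exp (-l * τ) := by
  have hint : IntegrableOn (fun τ : ℝ => Real.exp (-l * τ)) (Set.Ioc a b) :=
    (exp_neg_integrableOn_Ioi a hl).mono_set Set.Ioc_subset_Ioi_self
  have hconst : IntegrableOn (fun _ : ℝ => Real.exp (-l * b)) (Set.Ioc a b) := by
    refine integrableOn_const ?_
    rw [Real.volume_Ioc]; exact ENNReal.ofReal_ne_top
  have hle : ∫ τ in Set.Ioc a b, Real.exp (-l * b) ≤ ∫ τ in Set.Ioc a b, Real.exp (-l * τ) := by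
    refine setIntegral_mono_on hconst hint measurableSet_Ioc fun τ hτ => ?_
    exact Real.exp_le_exp.2 (by nlinarith [hτ.2])
  have hval : ∫ τ in Set.Ioc a b, Real.exp (-l * b) = (b - a) * Real.exp (-l * b) := by
    rw [setIntegral_const, Measure.real, Real.volume_Ioc, ENNReal.toReal_ofReal (by linarith), smul_eq_mul]
  rw [hval] at hle
  have hba : (0:ℝ) < b - a := by linarith
  have : 0 < (b - a) * Real.exp (-l * b) := by positivity
  linarith

/-- upper bound for the windowed Laplace transform by a constant dominating the integrand -/
lemma lap_window_le {k : ℝ → E → Measure E} {l : ℝ} (hl : 0 < l)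
    (hj : Measurable fun p : Set.Ioi (0:ℝ) × E => kOp (k p.1.1) (fun _ => (1:ℝ)) p.2)
    (hm : ∀ τ, 0 < τ → ∀ y, k τ y Set.univ ≤ 1) {a b : ℝ} (ha : 0 < a) (hab : a < b) (y : E)
    {c : ℝ} (hc : ∀ τ, τ ∈ Set.Ioc a b → kOp (k τ) (fun _ => (1:ℝ)) y ≤ c) :
    lap k l (Set.Ioc a b) y ≤ (∫ τ in Set.Ioc a b, Real.exp (-l * τ)) * c := by
  have hexp : IntegrableOn (fun τ : ℝ => Real.exp (-l * τ)) (Set.Ioc a b) :=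
    (exp_neg_integrableOn_Ioi a hl).mono_set Set.Ioc_subset_Ioi_self
  rw [← integral_mul_const]
  refine setIntegral_mono_on
    (lap_integrableOn hl hj hm (fun τ hτ => lt_trans ha hτ.1) y)
    (hexp.mul_const c) measurableSet_Ioc fun τ hτ => ?_
  have := (Real.exp_pos (-l * τ)).le
  nlinarith [hc τ hτ]

lemma lap_window_ge {k : ℝ → E → Measure E} {l : ℝ} (hl : 0 < l)
    (hj : Measurable fun p : Set.Ioi (0:ℝ) × E => kOp (k p.1.1) (fun _ => (1:ℝ)) p.2)
    (hm : ∀ τ, 0 < τ → ∀ y, k τ y Set.univ ≤ 1) {a b : ℝ} (ha : 0 < a) (hab : a < b) (y : E)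
    {c : ℝ} (hc : ∀ τ, τ ∈ Set.Ioc a b → c ≤ kOp (k τ) (fun _ => (1:ℝ)) y) :
    (∫ τ in Set.Ioc a b, Real.exp (-l * τ)) * c ≤ lap k l (Set.Ioc a b) y := by
  have hexp : IntegrableOn (fun τ : ℝ => Real.exp (-l * τ)) (Set.Ioc a b) :=
    (exp_neg_integrableOn_Ioi a hl).mono_set Set.Ioc_subset_Ioi_self
  rw [← integral_mul_const]
  refine setIntegral_mono_on (hexp.mul_const c)
    (lap_integrableOn hl hj hm (fun τ hτ => lt_trans ha hτ.1) y)
    measurableSet_Ioc fun τ hτ => ?_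
  have := (Real.exp_pos (-l * τ)).le
  nlinarith [hc τ hτ]

/-- monotone comparison of restricted Laplace transforms -/
lemma lap_mono {k k' : ℝ → E → Measure E} {l : ℝ} (hl : 0 < l)
    (hj : Measurable fun p : Set.Ioi (0:ℝ) × E => kOp (k p.1.1) (fun _ => (1:ℝ)) p.2)
    (hj' : Measurable fun p : Set.Ioi (0:ℝ) × E => kOp (k' p.1.1) (fun _ => (1:ℝ)) p.2)
    (hm : ∀ τ, 0 < τ → ∀ y, k τ y Set.univ ≤ 1)
    (hm' : ∀ τ, 0 < τ → ∀ y, k' τ y Set.univ ≤ 1)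
    {S : Set ℝ} (hSm : MeasurableSet S) (hS : S ⊆ Set.Ioi (0:ℝ)) (y : E)
    (hle : ∀ τ, 0 < τ → kOp (k τ) (fun _ => (1:ℝ)) y ≤ kOp (k' τ) (fun _ => (1:ℝ)) y) :
    lap k l S y ≤ lap k' l S y := by
  refine setIntegral_mono_on (lap_integrableOn hl hj hm hS y)
    (lap_integrableOn hl hj' hm' hS y) hSm fun τ hτ => ?_
  have := (Real.exp_pos (-l * τ)).le
  nlinarith [hle τ (hS hτ)]

/-- abstract triangle-inequality limit lemma -/
lemma tendsto_triangle {g : ℕ → ℝ} {gx : ℝ} {G : ℕ → ℕ → ℝ} {Gx : ℕ → ℝ}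
    {e : ℕ → ℕ → ℝ} {ex : ℕ → ℝ}
    (hdiff : ∀ n m, |g m - G n m| ≤ e n m) (hdiffx : ∀ n, |gx - Gx n| ≤ ex n)
    (hG : ∀ n, Tendsto (fun m => G n m) atTop (𝓝 (Gx n)))
    (he : ∀ n, Tendsto (fun m => e n m) atTop (𝓝 (ex n)))
    (hex : Tendsto ex atTop (𝓝 0)) :
    Tendsto g atTop (𝓝 gx) := by
  rw [Metric.tendsto_atTop]
  intro ε hε
  obtain ⟨n, hn⟩ := (hex.eventually_lt_const (show (0:ℝ) < ε/4 by linarith)).exists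
  have h1 : ∀ᶠ m in atTop, e n m < ε/2 :=
    (he n).eventually_lt_const (by linarith [le_trans (abs_nonneg _) (hdiffx n)])
  have h2 : ∀ᶠ m in atTop, |G n m - Gx n| < ε/4 := by
    have := (hG n).sub_const (Gx n)
    rw [show Gx n - Gx n = 0 by ring] at this
    have habs : Tendsto (fun m => |G n m - Gx n|) atTop (𝓝 |0|) := this.abs
    rw [abs_zero] at habs
    exact habs.eventually_lt_const (by linarith)
  obtain ⟨N, hN⟩ := eventually_atTop.1 (h1.and h2)
  refine ⟨N, fun m hm => ?_⟩
  obtain ⟨hm1, hm2⟩ := hN m hm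
  rw [Real.dist_eq]
  have hd1 : |g m - G n m| ≤ e n m := hdiff n m
  have hd2 : |Gx n - gx| ≤ ex n := by rw [abs_sub_comm]; exact hdiffx n
  calc |g m - gx| ≤ |g m - G n m| + |G n m - gx| := abs_sub_le _ _ _
    _ ≤ |g m - G n m| + (|G n m - Gx n| + |Gx n - gx|) := by
        linarith [abs_sub_le (G n m) (Gx n) gx]
    _ < ε := by linarith

end SF

namespace SF

lemma core_dec {E : Type*} [TopologicalSpace E] [PolishSpace E] [MeasurableSpace E] [BorelSpace E]
    (kseq : ℕ → ℝ → E → Measure E) (klim : ℝ → E → Measure E)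
    (hsg : ∀ n, IsKernelSemigroup (kseq n) 1)
    (hdec : ∀ n, ∀ t, 0 < t → ∀ x, ∀ A : Set E, MeasurableSet A →
        kseq (n + 1) t x A ≤ kseq n t x A)
    (hA : ∀ n, ∀ t, 0 < t → ∀ f : E → ℝ, IsBb f → IsCb (kOp (kseq n t) f))
    (hlimsg : IsKernelSemigroup klim 1)
    (hlim : ∀ f : E → ℝ, IsBb f → ∀ t, 0 < t → ∀ x,
      Tendsto (fun n => kOp (kseq n t) f x) atTop (𝓝 (kOp (klim t) f x)))
    {l : ℝ} (hl : 0 < l) (hr : Continuous (laplaceOp klim l (fun _ => (1 : ℝ))))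
    {t : ℝ} (ht : 0 < t) {f : E → ℝ} (hfm : Measurable f) {C : ℝ} (hfC : ∀ x, |f x| ≤ C) :
    Continuous (kOp (klim t) f) := by
  have hmassn : ∀ n τ, 0 < τ → ∀ y, kseq n τ y Set.univ ≤ 1 :=
    fun n τ hτ y => by simpa using (hsg n).2.1 τ hτ y
  have hmass : ∀ τ, 0 < τ → ∀ y, klim τ y Set.univ ≤ 1 :=
    fun τ hτ y => by simpa using hlimsg.2.1 τ hτ y
  have hfinn : ∀ n τ, 0 < τ → ∀ y (A : Set E), kseq n τ y A ≠ ⊤ := fun n τ hτ y A =>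
    ne_top_of_le_ne_top ENNReal.one_ne_top
      ((measure_mono (Set.subset_univ A)).trans (hmassn n τ hτ y))
  have hfin : ∀ τ, 0 < τ → ∀ y (A : Set E), klim τ y A ≠ ⊤ := fun τ hτ y A =>
    ne_top_of_le_ne_top ENNReal.one_ne_top
      ((measure_mono (Set.subset_univ A)).trans (hmass τ hτ y))
  have hjn : ∀ n, Measurable fun p : Set.Ioi (0:ℝ) × E =>
      kOp (kseq n p.1.1) (fun _ => (1:ℝ)) p.2 := fun n => (hsg n).2.2.2 _ isBb_one
  have hjlim : Measurable fun p : Set.Ioi (0:ℝ) × E => kOp (klim p.1.1) (fun _ => (1:ℝ)) p.2 :=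
    hlimsg.2.2.2 _ isBb_one
  have hAnti : ∀ τ, 0 < τ → ∀ y (A : Set E), MeasurableSet A →
      Antitone fun n => (kseq n τ y A).toReal := by
    intro τ hτ y A hAm
    refine antitone_nat_of_succ_le fun n => ?_
    exact ENNReal.toReal_mono (hfinn n τ hτ y A) (hdec n τ hτ y A hAm)
  have hlimA : ∀ τ, 0 < τ → ∀ y (A : Set E), MeasurableSet A →
      Tendsto (fun n => (kseq n τ y A).toReal) atTop (𝓝 (klim τ y A).toReal) := by
    intro τ hτ y A hAm
    have h := hlim _ (isBb_indicator hAm) τ hτ y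
    simp only [kOp_indicator _ hAm] at h
    exact h
  have hleA : ∀ n τ, 0 < τ → ∀ y (A : Set E), MeasurableSet A →
      (klim τ y A).toReal ≤ (kseq n τ y A).toReal := by
    intro n τ hτ y A hAm
    refine le_of_tendsto (hlimA τ hτ y A hAm) (eventually_atTop.2 ⟨n, fun m hm => ?_⟩)
    exact hAnti τ hτ y A hAm hm
  have hmeasle : ∀ n τ, 0 < τ → ∀ y, klim τ y ≤ kseq n τ y := by
    intro n τ hτ y
    refine Measure.le_iff.2 fun A hAm => ?_
    exact (ENNReal.toReal_le_toReal (hfin τ hτ y A) (hfinn n τ hτ y A)).1 (hleA n τ hτ y A hAm)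
  have huleun : ∀ n τ, 0 < τ → ∀ y,
      kOp (klim τ) (fun _ => (1:ℝ)) y ≤ kOp (kseq n τ) (fun _ => (1:ℝ)) y := by
    intro n τ hτ y
    rw [kOp_one, kOp_one]
    exact hleA n τ hτ y Set.univ MeasurableSet.univ
  have hulim : ∀ τ, 0 < τ → ∀ y, Tendsto (fun n => kOp (kseq n τ) (fun _ => (1:ℝ)) y) atTop
      (𝓝 (kOp (klim τ) (fun _ => (1:ℝ)) y)) := fun τ hτ y => hlim _ isBb_one τ hτ y
  have hucont : ∀ n τ, 0 < τ → Continuous fun y => kOp (kseq n τ) (fun _ => (1:ℝ)) y :=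
    fun n τ hτ => (hA n τ hτ _ isBb_one).1
  have huanti : ∀ (y : E) {σ τ : ℝ}, 0 < σ → σ ≤ τ →
      kOp (klim τ) (fun _ => (1:ℝ)) y ≤ kOp (klim σ) (fun _ => (1:ℝ)) y := by
    intro y σ τ h0 hστ
    rw [kOp_one, kOp_one]
    exact ENNReal.toReal_mono (hfin σ h0 y _) (mass_antitone hlimsg h0 hστ y)
  refine SeqContinuous.continuous ?_
  intro z x hz
  -- choose a good time s ∈ (t/2, t)
  have hth : 0 < t/2 := by linarith
  have hVanti : Antitone fun τ : ℝ => kOp (klim (max τ (t/2))) (fun _ => (1:ℝ)) x := by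
    intro τ₁ τ₂ h12
    exact huanti x (lt_of_lt_of_le hth (le_max_right _ _)) (max_le_max h12 le_rfl)
  have hgood : ¬ (Set.Ioo (t/2) t ⊆ {τ | ¬ContinuousAt
      (fun τ : ℝ => kOp (klim (max τ (t/2))) (fun _ => (1:ℝ)) x) τ}) := by
    intro hsub
    have h0 := measure_mono_null hsub (hVanti.countable_not_continuousAt.measure_zero volume)
    rw [Real.volume_Ioo] at h0
    have := ENNReal.ofReal_eq_zero.1 h0
    linarith
  obtain ⟨s, hsIoo, hsC⟩ := Set.not_subset.1 hgood
  rw [Set.mem_setOf_eq, not_not] at hsC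
  obtain ⟨hs1, hs2⟩ := hsIoo
  have hs0 : 0 < s := lt_trans hth hs1
  have hright : Tendsto (fun τ => kOp (klim τ) (fun _ => (1:ℝ)) x) (𝓝[>] s)
      (𝓝 (kOp (klim s) (fun _ => (1:ℝ)) x)) := by
    have h1 : Tendsto (fun τ : ℝ => kOp (klim (max τ (t/2))) (fun _ => (1:ℝ)) x) (𝓝[>] s)
        (𝓝 (kOp (klim (max s (t/2))) (fun _ => (1:ℝ)) x)) :=
      (hsC.continuousWithinAt).tendsto
    rw [max_eq_left hs1.le] at h1
    refine h1.congr' ?_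
    refine eventually_mem_nhdsWithin.mono fun τ (hτ : τ ∈ Set.Ioi s) => ?_
    show kOp (klim (max τ (t/2))) (fun _ => (1:ℝ)) x = kOp (klim τ) (fun _ => (1:ℝ)) x
    rw [max_eq_left (le_of_lt (lt_trans hs1 hτ))]
  -- masses converge along the sequence at time s
  have keymass : Tendsto (fun m => kOp (klim s) (fun _ => (1:ℝ)) (z m)) atTop
      (𝓝 (kOp (klim s) (fun _ => (1:ℝ)) x)) := by
    refine tendsto_order.2 ⟨?_, ?_⟩
    · intro a ha
      set a' := (a + kOp (klim s) (fun _ => (1:ℝ)) x) / 2 with ha'def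
      have haa' : a < a' := by rw [ha'def]; linarith
      have ha'u : a' < kOp (klim s) (fun _ => (1:ℝ)) x := by rw [ha'def]; linarith
      obtain ⟨τ₀, hτ₀a, hτ₀s⟩ :=
        ((hright.eventually_const_lt ha'u).and eventually_mem_nhdsWithin).exists
      rw [Set.mem_Ioi] at hτ₀s
      set W := ∫ τ in Set.Ioc s τ₀, Real.exp (-l * τ) with hWdef
      have hWpos : 0 < W := W_pos hl hτ₀s
      set Φ : ℕ → E → ℝ := fun n y => laplaceOp klim l (fun _ => (1:ℝ)) y
        - lap (kseq n) l (Set.Ioc 0 s) y - lap (kseq n) l (Set.Ioi τ₀) y with hΦ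
      have hsub1 : Set.Ioc (0:ℝ) s ⊆ Set.Ioi 0 := fun τ hτ => hτ.1
      have hsub2 : Set.Ioi τ₀ ⊆ Set.Ioi (0:ℝ) := fun τ hτ => lt_trans (lt_trans hs0 hτ₀s) hτ
      have hsubw : Set.Ioc s τ₀ ⊆ Set.Ioi (0:ℝ) := fun τ hτ => lt_trans hs0 hτ.1
      have hsplit : ∀ y, lap klim l (Set.Ioi 0) y = lap klim l (Set.Ioc 0 s) y
          + lap klim l (Set.Ioc s τ₀) y + lap klim l (Set.Ioi τ₀) y :=
        fun y => lap_split hl hjlim hmass hs0 hτ₀s y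
      have hΦle : ∀ n y, Φ n y ≤ W * kOp (klim s) (fun _ => (1:ℝ)) y := by
        intro n y
        have e1 : lap klim l (Set.Ioc 0 s) y ≤ lap (kseq n) l (Set.Ioc 0 s) y :=
          lap_mono hl hjlim (hjn n) hmass (hmassn n) measurableSet_Ioc hsub1 y
            (fun τ hτ => huleun n τ hτ y)
        have e2 : lap klim l (Set.Ioi τ₀) y ≤ lap (kseq n) l (Set.Ioi τ₀) y :=
          lap_mono hl hjlim (hjn n) hmass (hmassn n) measurableSet_Ioi hsub2 y
            (fun τ hτ => huleun n τ hτ y)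
        have e3 : lap klim l (Set.Ioc s τ₀) y
            ≤ W * kOp (klim s) (fun _ => (1:ℝ)) y := by
          have h := lap_window_le hl hjlim hmass hs0 hτ₀s y
            (c := kOp (klim s) (fun _ => (1:ℝ)) y) (fun τ hτ => huanti y hs0 hτ.1.le)
          rw [← hWdef] at h
          linarith [h]
        have e0 : laplaceOp klim l (fun _ => (1:ℝ)) y = lap klim l (Set.Ioi 0) y := by
          rw [lap_Ioi]
        rw [hΦ]
        simp only []
        rw [e0, hsplit y]
        linarith
      have hΦcont : ∀ n, Continuous (Φ n) := by
        intro n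
        rw [hΦ]
        exact (hr.sub (lap_continuous hl (hjn n) (hmassn n)
            (fun τ hτ => hucont n τ hτ) measurableSet_Ioc hsub1)).sub
          (lap_continuous hl (hjn n) (hmassn n)
            (fun τ hτ => hucont n τ hτ) measurableSet_Ioi hsub2)
      have hΦx : Tendsto (fun n => Φ n x) atTop (𝓝 (lap klim l (Set.Ioc s τ₀) x)) := by
        have h1 := lap_tendsto hl hjn hmassn measurableSet_Ioc hsub1 x (fun τ hτ => hulim τ hτ x)
        have h2 := lap_tendsto hl hjn hmassn measurableSet_Ioi hsub2 x (fun τ hτ => hulim τ hτ x)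
        have h3 : Tendsto (fun n => Φ n x) atTop
            (𝓝 (laplaceOp klim l (fun _ => (1:ℝ)) x - lap klim l (Set.Ioc 0 s) x
              - lap klim l (Set.Ioi τ₀) x)) := by
          rw [hΦ]
          exact (tendsto_const_nhds.sub h1).sub h2
        have e0 : laplaceOp klim l (fun _ => (1:ℝ)) x = lap klim l (Set.Ioi 0) x := by
          rw [lap_Ioi]
        rw [e0, hsplit x] at h3
        have hval : lap klim l (Set.Ioc 0 s) x + lap klim l (Set.Ioc s τ₀) x
            + lap klim l (Set.Ioi τ₀) x - lap klim l (Set.Ioc 0 s) x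
            - lap klim l (Set.Ioi τ₀) x = lap klim l (Set.Ioc s τ₀) x := by ring
        rw [hval] at h3
        exact h3
      have hwin_lb : W * a' < lap klim l (Set.Ioc s τ₀) x := by
        have h4 : W * kOp (klim τ₀) (fun _ => (1:ℝ)) x ≤ lap klim l (Set.Ioc s τ₀) x := by
          have h := lap_window_ge hl hjlim hmass hs0 hτ₀s x
            (c := kOp (klim τ₀) (fun _ => (1:ℝ)) x) (fun τ hτ => huanti x (hsubw hτ) hτ.2)
          rw [← hWdef] at h
          linarith [h]
        nlinarith [hτ₀a, hWpos]
      obtain ⟨n, hn⟩ := (hΦx.eventually_const_lt hwin_lb).exists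
      have hev : ∀ᶠ m in atTop, W * a' < Φ n (z m) :=
        (((hΦcont n).tendsto x).comp hz).eventually_const_lt hn
      refine hev.mono fun m hm => ?_
      have h5 : W * a' < W * kOp (klim s) (fun _ => (1:ℝ)) (z m) :=
        lt_of_lt_of_le hm (hΦle n (z m))
      have h6 : a' < kOp (klim s) (fun _ => (1:ℝ)) (z m) := (mul_lt_mul_iff_right₀ hWpos).1 h5
      linarith
    · intro a ha
      obtain ⟨n, hn⟩ := ((hulim s hs0 x).eventually_lt_const ha).exists
      have hev : ∀ᶠ m in atTop, kOp (kseq n s) (fun _ => (1:ℝ)) (z m) < a :=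
        (((hucont n s hs0).tendsto x).comp hz).eventually_lt_const hn
      exact hev.mono fun m hm => lt_of_le_of_lt (huleun n s hs0 (z m)) hm
  -- final step via the semigroup law
  have hts : 0 < t - s := by linarith
  have hjf : Measurable fun p : Set.Ioi (0:ℝ) × E => kOp (klim p.1.1) f p.2 :=
    hlimsg.2.2.2 f ⟨hfm, C, hfC⟩
  have hcm : Measurable fun y : E => ((⟨t - s, hts⟩ : Set.Ioi (0:ℝ)), y) :=
    measurable_const.prodMk measurable_id
  have hgm : Measurable fun y => kOp (klim (t - s)) f y := hjf.comp hcm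
  have hgC : ∀ y, |kOp (klim (t - s)) f y| ≤ C := fun y => kOp_abs_le (hmass _ hts y) hfC
  have hrw : kOp (klim t) f = kOp (klim s) (fun y => kOp (klim (t - s)) f y) := by
    funext y
    have h := kOp_comp hlimsg hs0 hts ⟨hfm, C, hfC⟩ y
    rw [show s + (t - s) = t by ring] at h
    exact h
  show Tendsto (kOp (klim t) f ∘ z) atTop (𝓝 (kOp (klim t) f x))
  rw [hrw]
  refine tendsto_triangle
    (G := fun n m => kOp (kseq n s) (fun y => kOp (klim (t - s)) f y) (z m))
    (Gx := fun n => kOp (kseq n s) (fun y => kOp (klim (t - s)) f y) x)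
    (e := fun n m => C * (kOp (kseq n s) (fun _ => (1:ℝ)) (z m)
      - kOp (klim s) (fun _ => (1:ℝ)) (z m)))
    (ex := fun n => C * (kOp (kseq n s) (fun _ => (1:ℝ)) x - kOp (klim s) (fun _ => (1:ℝ)) x))
    ?_ ?_ ?_ ?_ ?_
  · intro n m
    have h := integral_diff_mass_le (hmassn n s hs0 (z m)) (hmeasle n s hs0 (z m)) hgm hgC
    rw [abs_sub_comm] at h
    show |kOp (klim s) (fun y => kOp (klim (t - s)) f y) (z m)
        - kOp (kseq n s) (fun y => kOp (klim (t - s)) f y) (z m)|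
      ≤ C * (kOp (kseq n s) (fun _ => (1:ℝ)) (z m) - kOp (klim s) (fun _ => (1:ℝ)) (z m))
    rw [kOp_one, kOp_one]
    exact h
  · intro n
    have h := integral_diff_mass_le (hmassn n s hs0 x) (hmeasle n s hs0 x) hgm hgC
    rw [abs_sub_comm] at h
    show |kOp (klim s) (fun y => kOp (klim (t - s)) f y) x
        - kOp (kseq n s) (fun y => kOp (klim (t - s)) f y) x|
      ≤ C * (kOp (kseq n s) (fun _ => (1:ℝ)) x - kOp (klim s) (fun _ => (1:ℝ)) x)
    rw [kOp_one, kOp_one]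
    exact h
  · intro n
    exact ((hA n s hs0 _ ⟨hgm, C, hgC⟩).1.tendsto x).comp hz
  · intro n
    exact ((((hucont n s hs0).tendsto x).comp hz).sub keymass).const_mul C
  · have h := ((hulim s hs0 x).sub (tendsto_const_nhds
      (x := kOp (klim s) (fun _ => (1:ℝ)) x))).const_mul C
    simpa using h

end SF

namespace SF

lemma core_inc {E : Type*} [TopologicalSpace E] [PolishSpace E] [MeasurableSpace E] [BorelSpace E]
    (kseq : ℕ → ℝ → E → Measure E) (klim : ℝ → E → Measure E)
    (hsg : ∀ n, IsKernelSemigroup (kseq n) 1)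
    (hinc : ∀ n, ∀ t, 0 < t → ∀ x, ∀ A : Set E, MeasurableSet A →
        kseq n t x A ≤ kseq (n + 1) t x A)
    (hA : ∀ n, ∀ t, 0 < t → ∀ f : E → ℝ, IsBb f → IsCb (kOp (kseq n t) f))
    (hlimsg : IsKernelSemigroup klim 1)
    (hlim : ∀ f : E → ℝ, IsBb f → ∀ t, 0 < t → ∀ x,
      Tendsto (fun n => kOp (kseq n t) f x) atTop (𝓝 (kOp (klim t) f x)))
    {l : ℝ} (hl : 0 < l) (hr : Continuous (laplaceOp klim l (fun _ => (1 : ℝ))))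
    {t : ℝ} (ht : 0 < t) {f : E → ℝ} (hfm : Measurable f) {C : ℝ} (hfC : ∀ x, |f x| ≤ C) :
    Continuous (kOp (klim t) f) := by
  have hmassn : ∀ n τ, 0 < τ → ∀ y, kseq n τ y Set.univ ≤ 1 :=
    fun n τ hτ y => by simpa using (hsg n).2.1 τ hτ y
  have hmass : ∀ τ, 0 < τ → ∀ y, klim τ y Set.univ ≤ 1 :=
    fun τ hτ y => by simpa using hlimsg.2.1 τ hτ y
  have hfinn : ∀ n τ, 0 < τ → ∀ y (A : Set E), kseq n τ y A ≠ ⊤ := fun n τ hτ y A =>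
    ne_top_of_le_ne_top ENNReal.one_ne_top
      ((measure_mono (Set.subset_univ A)).trans (hmassn n τ hτ y))
  have hfin : ∀ τ, 0 < τ → ∀ y (A : Set E), klim τ y A ≠ ⊤ := fun τ hτ y A =>
    ne_top_of_le_ne_top ENNReal.one_ne_top
      ((measure_mono (Set.subset_univ A)).trans (hmass τ hτ y))
  have hjn : ∀ n, Measurable fun p : Set.Ioi (0:ℝ) × E =>
      kOp (kseq n p.1.1) (fun _ => (1:ℝ)) p.2 := fun n => (hsg n).2.2.2 _ isBb_one
  have hjlim : Measurable fun p : Set.Ioi (0:ℝ) × E => kOp (klim p.1.1) (fun _ => (1:ℝ)) p.2 :=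
    hlimsg.2.2.2 _ isBb_one
  have hMono : ∀ τ, 0 < τ → ∀ y (A : Set E), MeasurableSet A →
      Monotone fun n => (kseq n τ y A).toReal := by
    intro τ hτ y A hAm
    refine monotone_nat_of_le_succ fun n => ?_
    exact ENNReal.toReal_mono (hfinn (n+1) τ hτ y A) (hinc n τ hτ y A hAm)
  have hlimA : ∀ τ, 0 < τ → ∀ y (A : Set E), MeasurableSet A →
      Tendsto (fun n => (kseq n τ y A).toReal) atTop (𝓝 (klim τ y A).toReal) := by
    intro τ hτ y A hAm
    have h := hlim _ (isBb_indicator hAm) τ hτ y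
    simp only [kOp_indicator _ hAm] at h
    exact h
  have hleA : ∀ n τ, 0 < τ → ∀ y (A : Set E), MeasurableSet A →
      (kseq n τ y A).toReal ≤ (klim τ y A).toReal := by
    intro n τ hτ y A hAm
    refine ge_of_tendsto (hlimA τ hτ y A hAm) (eventually_atTop.2 ⟨n, fun m hm => ?_⟩)
    exact hMono τ hτ y A hAm hm
  have hmeasle : ∀ n τ, 0 < τ → ∀ y, kseq n τ y ≤ klim τ y := by
    intro n τ hτ y
    refine Measure.le_iff.2 fun A hAm => ?_
    exact (ENNReal.toReal_le_toReal (hfinn n τ hτ y A) (hfin τ hτ y A)).1 (hleA n τ hτ y A hAm)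
  have hunleu : ∀ n τ, 0 < τ → ∀ y,
      kOp (kseq n τ) (fun _ => (1:ℝ)) y ≤ kOp (klim τ) (fun _ => (1:ℝ)) y := by
    intro n τ hτ y
    rw [kOp_one, kOp_one]
    exact hleA n τ hτ y Set.univ MeasurableSet.univ
  have hulim : ∀ τ, 0 < τ → ∀ y, Tendsto (fun n => kOp (kseq n τ) (fun _ => (1:ℝ)) y) atTop
      (𝓝 (kOp (klim τ) (fun _ => (1:ℝ)) y)) := fun τ hτ y => hlim _ isBb_one τ hτ y
  have hucont : ∀ n τ, 0 < τ → Continuous fun y => kOp (kseq n τ) (fun _ => (1:ℝ)) y :=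
    fun n τ hτ => (hA n τ hτ _ isBb_one).1
  have huanti : ∀ (y : E) {σ τ : ℝ}, 0 < σ → σ ≤ τ →
      kOp (klim τ) (fun _ => (1:ℝ)) y ≤ kOp (klim σ) (fun _ => (1:ℝ)) y := by
    intro y σ τ h0 hστ
    rw [kOp_one, kOp_one]
    exact ENNReal.toReal_mono (hfin σ h0 y _) (mass_antitone hlimsg h0 hστ y)
  refine SeqContinuous.continuous ?_
  intro z x hz
  have hth : 0 < t/2 := by linarith
  have hVanti : Antitone fun τ : ℝ => kOp (klim (max τ (t/2))) (fun _ => (1:ℝ)) x := by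
    intro τ₁ τ₂ h12
    exact huanti x (lt_of_lt_of_le hth (le_max_right _ _)) (max_le_max h12 le_rfl)
  have hgood : ¬ (Set.Ioo (t/2) t ⊆ {τ | ¬ContinuousAt
      (fun τ : ℝ => kOp (klim (max τ (t/2))) (fun _ => (1:ℝ)) x) τ}) := by
    intro hsub
    have h0 := measure_mono_null hsub (hVanti.countable_not_continuousAt.measure_zero volume)
    rw [Real.volume_Ioo] at h0
    have := ENNReal.ofReal_eq_zero.1 h0
    linarith
  obtain ⟨s, hsIoo, hsC⟩ := Set.not_subset.1 hgood
  rw [Set.mem_setOf_eq, not_not] at hsC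
  obtain ⟨hs1, hs2⟩ := hsIoo
  have hs0 : 0 < s := lt_trans hth hs1
  have hleft : Tendsto (fun τ => kOp (klim τ) (fun _ => (1:ℝ)) x) (𝓝[<] s)
      (𝓝 (kOp (klim s) (fun _ => (1:ℝ)) x)) := by
    have h1 : Tendsto (fun τ : ℝ => kOp (klim (max τ (t/2))) (fun _ => (1:ℝ)) x) (𝓝[<] s)
        (𝓝 (kOp (klim (max s (t/2))) (fun _ => (1:ℝ)) x)) :=
      (hsC.continuousWithinAt).tendsto
    rw [max_eq_left hs1.le] at h1
    refine h1.congr' ?_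
    refine (eventually_of_mem (Ioo_mem_nhdsLT hs1) fun τ hτ => hτ).mono
      fun τ (hτ : τ ∈ Set.Ioo (t/2) s) => ?_
    show kOp (klim (max τ (t/2))) (fun _ => (1:ℝ)) x = kOp (klim τ) (fun _ => (1:ℝ)) x
    rw [max_eq_left hτ.1.le]
  have keymass : Tendsto (fun m => kOp (klim s) (fun _ => (1:ℝ)) (z m)) atTop
      (𝓝 (kOp (klim s) (fun _ => (1:ℝ)) x)) := by
    refine tendsto_order.2 ⟨?_, ?_⟩
    · intro a ha
      obtain ⟨n, hn⟩ := ((hulim s hs0 x).eventually_const_lt ha).exists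
      have hev : ∀ᶠ m in atTop, a < kOp (kseq n s) (fun _ => (1:ℝ)) (z m) :=
        (((hucont n s hs0).tendsto x).comp hz).eventually_const_lt hn
      exact hev.mono fun m hm => lt_of_lt_of_le hm (hunleu n s hs0 (z m))
    · intro a ha
      set a' := (kOp (klim s) (fun _ => (1:ℝ)) x + a) / 2 with ha'def
      have haa' : a' < a := by rw [ha'def]; linarith
      have ha'u : kOp (klim s) (fun _ => (1:ℝ)) x < a' := by rw [ha'def]; linarith
      obtain ⟨τ₀, hτ₀a, hτ₀mem⟩ :=
        ((hleft.eventually_lt_const ha'u).and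
          (eventually_of_mem (Ioo_mem_nhdsLT hs1) fun τ hτ => hτ)).exists
      have hτ₀0 : 0 < τ₀ := lt_trans hth hτ₀mem.1
      have hτ₀s : τ₀ < s := hτ₀mem.2
      set W := ∫ τ in Set.Ioc τ₀ s, Real.exp (-l * τ) with hWdef
      have hWpos : 0 < W := W_pos hl hτ₀s
      set Φ : ℕ → E → ℝ := fun n y => laplaceOp klim l (fun _ => (1:ℝ)) y
        - lap (kseq n) l (Set.Ioc 0 τ₀) y - lap (kseq n) l (Set.Ioi s) y with hΦ
      have hsub1 : Set.Ioc (0:ℝ) τ₀ ⊆ Set.Ioi 0 := fun τ hτ => hτ.1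
      have hsub2 : Set.Ioi s ⊆ Set.Ioi (0:ℝ) := fun τ hτ => lt_trans hs0 hτ
      have hsubw : Set.Ioc τ₀ s ⊆ Set.Ioi (0:ℝ) := fun τ hτ => lt_trans hτ₀0 hτ.1
      have hsplit : ∀ y, lap klim l (Set.Ioi 0) y = lap klim l (Set.Ioc 0 τ₀) y
          + lap klim l (Set.Ioc τ₀ s) y + lap klim l (Set.Ioi s) y :=
        fun y => lap_split hl hjlim hmass hτ₀0 hτ₀s y
      have hΦge : ∀ n y, W * kOp (klim s) (fun _ => (1:ℝ)) y ≤ Φ n y := by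
        intro n y
        have e1 : lap (kseq n) l (Set.Ioc 0 τ₀) y ≤ lap klim l (Set.Ioc 0 τ₀) y :=
          lap_mono hl (hjn n) hjlim (hmassn n) hmass measurableSet_Ioc hsub1 y
            (fun τ hτ => hunleu n τ hτ y)
        have e2 : lap (kseq n) l (Set.Ioi s) y ≤ lap klim l (Set.Ioi s) y :=
          lap_mono hl (hjn n) hjlim (hmassn n) hmass measurableSet_Ioi hsub2 y
            (fun τ hτ => hunleu n τ hτ y)
        have e3 : W * kOp (klim s) (fun _ => (1:ℝ)) y ≤ lap klim l (Set.Ioc τ₀ s) y := by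
          have h := lap_window_ge hl hjlim hmass hτ₀0 hτ₀s y
            (c := kOp (klim s) (fun _ => (1:ℝ)) y) (fun τ hτ => huanti y (hsubw hτ) hτ.2)
          rw [← hWdef] at h
          linarith [h]
        have e0 : laplaceOp klim l (fun _ => (1:ℝ)) y = lap klim l (Set.Ioi 0) y := by
          rw [lap_Ioi]
        rw [hΦ]
        simp only []
        rw [e0, hsplit y]
        linarith
      have hΦcont : ∀ n, Continuous (Φ n) := by
        intro n
        rw [hΦ]
        exact (hr.sub (lap_continuous hl (hjn n) (hmassn n)
            (fun τ hτ => hucont n τ hτ) measurableSet_Ioc hsub1)).sub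
          (lap_continuous hl (hjn n) (hmassn n)
            (fun τ hτ => hucont n τ hτ) measurableSet_Ioi hsub2)
      have hΦx : Tendsto (fun n => Φ n x) atTop (𝓝 (lap klim l (Set.Ioc τ₀ s) x)) := by
        have h1 := lap_tendsto hl hjn hmassn measurableSet_Ioc hsub1 x (fun τ hτ => hulim τ hτ x)
        have h2 := lap_tendsto hl hjn hmassn measurableSet_Ioi hsub2 x (fun τ hτ => hulim τ hτ x)
        have h3 : Tendsto (fun n => Φ n x) atTop
            (𝓝 (laplaceOp klim l (fun _ => (1:ℝ)) x - lap klim l (Set.Ioc 0 τ₀) x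
              - lap klim l (Set.Ioi s) x)) := by
          rw [hΦ]
          exact (tendsto_const_nhds.sub h1).sub h2
        have e0 : laplaceOp klim l (fun _ => (1:ℝ)) x = lap klim l (Set.Ioi 0) x := by
          rw [lap_Ioi]
        rw [e0, hsplit x] at h3
        have hval : lap klim l (Set.Ioc 0 τ₀) x + lap klim l (Set.Ioc τ₀ s) x
            + lap klim l (Set.Ioi s) x - lap klim l (Set.Ioc 0 τ₀) x
            - lap klim l (Set.Ioi s) x = lap klim l (Set.Ioc τ₀ s) x := by ring
        rw [hval] at h3
        exact h3
      have hwin_ub : lap klim l (Set.Ioc τ₀ s) x < W * a' := by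
        have h4 : lap klim l (Set.Ioc τ₀ s) x ≤ W * kOp (klim τ₀) (fun _ => (1:ℝ)) x := by
          have h := lap_window_le hl hjlim hmass hτ₀0 hτ₀s x
            (c := kOp (klim τ₀) (fun _ => (1:ℝ)) x) (fun τ hτ => huanti x hτ₀0 hτ.1.le)
          rw [← hWdef] at h
          linarith [h]
        nlinarith [hτ₀a, hWpos]
      obtain ⟨n, hn⟩ := (hΦx.eventually_lt_const hwin_ub).exists
      have hev : ∀ᶠ m in atTop, Φ n (z m) < W * a' :=
        (((hΦcont n).tendsto x).comp hz).eventually_lt_const hn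
      refine hev.mono fun m hm => ?_
      have h5 : W * kOp (klim s) (fun _ => (1:ℝ)) (z m) < W * a' :=
        lt_of_le_of_lt (hΦge n (z m)) hm
      have h6 : kOp (klim s) (fun _ => (1:ℝ)) (z m) < a' := (mul_lt_mul_iff_right₀ hWpos).1 h5
      linarith
  have hts : 0 < t - s := by linarith
  have hjf : Measurable fun p : Set.Ioi (0:ℝ) × E => kOp (klim p.1.1) f p.2 :=
    hlimsg.2.2.2 f ⟨hfm, C, hfC⟩
  have hcm : Measurable fun y : E => ((⟨t - s, hts⟩ : Set.Ioi (0:ℝ)), y) :=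
    measurable_const.prodMk measurable_id
  have hgm : Measurable fun y => kOp (klim (t - s)) f y := hjf.comp hcm
  have hgC : ∀ y, |kOp (klim (t - s)) f y| ≤ C := fun y => kOp_abs_le (hmass _ hts y) hfC
  have hrw : kOp (klim t) f = kOp (klim s) (fun y => kOp (klim (t - s)) f y) := by
    funext y
    have h := kOp_comp hlimsg hs0 hts ⟨hfm, C, hfC⟩ y
    rw [show s + (t - s) = t by ring] at h
    exact h
  show Tendsto (kOp (klim t) f ∘ z) atTop (𝓝 (kOp (klim t) f x))
  rw [hrw]
  refine tendsto_triangle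
    (G := fun n m => kOp (kseq n s) (fun y => kOp (klim (t - s)) f y) (z m))
    (Gx := fun n => kOp (kseq n s) (fun y => kOp (klim (t - s)) f y) x)
    (e := fun n m => C * (kOp (klim s) (fun _ => (1:ℝ)) (z m)
      - kOp (kseq n s) (fun _ => (1:ℝ)) (z m)))
    (ex := fun n => C * (kOp (klim s) (fun _ => (1:ℝ)) x - kOp (kseq n s) (fun _ => (1:ℝ)) x))
    ?_ ?_ ?_ ?_ ?_
  · intro n m
    have h := integral_diff_mass_le (hmass s hs0 (z m)) (hmeasle n s hs0 (z m)) hgm hgC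
    show |kOp (klim s) (fun y => kOp (klim (t - s)) f y) (z m)
        - kOp (kseq n s) (fun y => kOp (klim (t - s)) f y) (z m)|
      ≤ C * (kOp (klim s) (fun _ => (1:ℝ)) (z m) - kOp (kseq n s) (fun _ => (1:ℝ)) (z m))
    rw [kOp_one, kOp_one]
    exact h
  · intro n
    have h := integral_diff_mass_le (hmass s hs0 x) (hmeasle n s hs0 x) hgm hgC
    show |kOp (klim s) (fun y => kOp (klim (t - s)) f y) x
        - kOp (kseq n s) (fun y => kOp (klim (t - s)) f y) x|
      ≤ C * (kOp (klim s) (fun _ => (1:ℝ)) x - kOp (kseq n s) (fun _ => (1:ℝ)) x)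
    rw [kOp_one, kOp_one]
    exact h
  · intro n
    exact ((hA n s hs0 _ ⟨hgm, C, hgC⟩).1.tendsto x).comp hz
  · intro n
    exact (keymass.sub (((hucont n s hs0).tendsto x).comp hz)).const_mul C
  · have h := ((tendsto_const_nhds (x := kOp (klim s) (fun _ => (1:ℝ)) x)).sub
      (hulim s hs0 x)).const_mul C
    simpa using h

end SF

/-- **Monotone convergence theorem for strong Feller semigroups.** If a monotone
sequence of sub-Markovian semigroups of kernel operators consists of strong Feller
semigroups and the Laplace transform of the limit semigroup maps `𝟙` to a continuous
function, then the limit semigroup enjoys the strong Feller property. -/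
theorem strong_feller_of_limit_semigroup
    {E : Type*} [TopologicalSpace E] [PolishSpace E] [MeasurableSpace E] [BorelSpace E]
    (kseq : ℕ → ℝ → E → Measure E) (klim : ℝ → E → Measure E)
    (hsg : ∀ n, IsKernelSemigroup (kseq n) 1)
    (hmono : (∀ n, ∀ t, 0 < t → ∀ x, ∀ A : Set E, MeasurableSet A →
        kseq n t x A ≤ kseq (n + 1) t x A) ∨
      (∀ n, ∀ t, 0 < t → ∀ x, ∀ A : Set E, MeasurableSet A →
        kseq (n + 1) t x A ≤ kseq n t x A))
    (hA : ∀ n, ∀ t, 0 < t → ∀ f : E → ℝ, IsBb f → IsCb (kOp (kseq n t) f))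
    (hlimsg : IsKernelSemigroup klim 1)
    (hlim : ∀ f : E → ℝ, IsBb f → ∀ t, 0 < t → ∀ x,
      Tendsto (fun n => kOp (kseq n t) f x) atTop (𝓝 (kOp (klim t) f x)))
    (hB : ∃ l : ℝ, 0 < l ∧ Continuous (laplaceOp klim l (fun _ => (1 : ℝ)))) :
    ∀ t, 0 < t → ∀ f : E → ℝ, IsBb f → IsCb (kOp (klim t) f) := by
  intro t ht f hf
  obtain ⟨hfm, C, hfC⟩ := hf
  obtain ⟨l, hl, hr⟩ := hB
  refine ⟨?_, C, fun x => SF.kOp_abs_le (by simpa using hlimsg.2.1 t ht x) hfC⟩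
  rcases hmono with hinc | hdec
  · exact SF.core_inc kseq klim hsg hinc hA hlimsg hlim hl hr ht hfm hfC
  · exact SF.core_dec kseq klim hsg hdec hA hlimsg hlim hl hr ht hfm hfC
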